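/- Let X be a hyper-regular k-dimensional simplicial complex that is (β, t)-sparse. Then for every signing f : X(k) → {±1}, the f-local lift X̂^f is also (β, t)-sparse. -/

import Mathlib

open scoped Classical
noncomputable section

namespace HDX

variable {V W : Type*}

/-- sign of a Bool as an integer (`true ↦ 1`, `false ↦ -1`). -/
def sgn (b : Bool) : ℤ := if b then 1 else -1

/-- projection forgetting signs -/
def proj [DecidableEq V] (σ : Finset (V × Bool)) : Finset V := σ.image Prod.fst

/-- product of the signs of a decorated face -/
def signF (σ : Finset (V × Bool)) : ℤ := ∏ x ∈ σ, sgn x.2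

/-- the `f`-local lift of a `k`-dimensional complex `X` -/
def localLift [Fintype V] [DecidableEq V] (X : Finset (Finset V)) (f : Finset V → ℤ)
    (k : ℕ) : Finset (Finset (V × Bool)) :=
  Finset.univ.filter (fun σ' => proj σ' ∈ X ∧ σ'.card = (proj σ').card ∧
    (σ'.card = k + 1 → signF σ' = f (proj σ')))

/-- the link of a face -/
def link [DecidableEq W] (X : Finset (Finset W)) (σ : Finset W) : Finset (Finset W) :=
  (X.filter (fun τ => σ ⊆ τ)).image (fun τ => τ \ σ)

/-- degree of a face: the number of faces of one higher dimension containing it -/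
def deg [DecidableEq W] (X : Finset (Finset W)) (σ : Finset W) : ℕ :=
  (X.filter (fun τ => σ ⊆ τ ∧ τ.card = σ.card + 1)).card

/-- a simplicial complex: downward closed (to nonempty subsets) -/
def DownwardClosed (X : Finset (Finset W)) : Prop :=
  ∀ τ ∈ X, ∀ σ : Finset W, σ ⊆ τ → σ.Nonempty → σ ∈ X

/-- pure `k`-dimensional -/
def Pure (X : Finset (Finset W)) (k : ℕ) : Prop :=
  (∀ τ ∈ X, τ.card ≤ k + 1) ∧ ∀ τ ∈ X, ∃ ρ ∈ X, τ ⊆ ρ ∧ ρ.card = k + 1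

/-- `(d 0, …, d (k-1))`-regular -/
def Regular (X : Finset (Finset W)) (k : ℕ) (d : ℕ → ℕ) : Prop :=
  ∀ i < k, ∀ σ ∈ X, σ.card = i + 1 → deg X σ = d i

/-- the vertices of the link of `σ` -/
def linkVert [DecidableEq W] (X : Finset (Finset W)) (σ : Finset W) : Type _ :=
  {v : W // {v} ∈ link X σ}

instance [Fintype W] [DecidableEq W] (X : Finset (Finset W)) (σ : Finset W) :
    Fintype (linkVert X σ) := Subtype.fintype _

instance [DecidableEq W] (X : Finset (Finset W)) (σ : Finset W) :
    DecidableEq (linkVert X σ) := Subtype.instDecidableEq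

/-- random walk matrix of the 1-skeleton of the link of `σ`, normalized by `dreg` -/
def linkRW [Fintype W] [DecidableEq W] (X : Finset (Finset W)) (σ : Finset W) (dreg : ℕ) :
    Matrix (linkVert X σ) (linkVert X σ) ℝ :=
  fun u w => if u.1 ≠ w.1 ∧ {u.1, w.1} ∈ link X σ then (dreg : ℝ)⁻¹ else 0

/-- signed random walk matrix of the 1-skeleton of the link of `σ` -/
def linkRWSigned [Fintype W] [DecidableEq W] (X : Finset (Finset W)) (σ : Finset W)
    (dreg : ℕ) (g : Finset W → ℤ) : Matrix (linkVert X σ) (linkVert X σ) ℝ :=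
  fun u w => if u.1 ≠ w.1 ∧ {u.1, w.1} ∈ link X σ then (g {u.1, w.1} : ℝ) / (dreg : ℝ) else 0

/-- largest absolute value of the eigenvalues other than (one copy of) the trivial
eigenvalue `1`, of a matrix: computed via the roots of the characteristic polynomial. -/
def lam {n : Type*} [Fintype n] [DecidableEq n] (M : Matrix n n ℝ) : ℝ :=
  (((M.charpoly.roots).erase 1).map (fun x => |x|)).fold max 0

/-- `λ`-two sided high dimensional expander (links normalized by their regular degrees) -/
def IsHDX [Fintype W] [DecidableEq W] (X : Finset (Finset W)) (k : ℕ) (d : ℕ → ℕ)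
    (l : ℝ) : Prop :=
  ∀ σ : Finset W, (σ = ∅ ∨ σ ∈ X) → σ.card ≤ k - 1 → lam (linkRW X σ (d σ.card)) ≤ l

/-- the ordered pairs in `S × T` that form an edge of the link of `σ` -/
def pairs [DecidableEq W] (X : Finset (Finset W)) (σ : Finset W) (S T : Finset W) :
    Finset (W × W) :=
  (S ×ˢ T).filter (fun p => p.1 ≠ p.2 ∧ {p.1, p.2} ∈ link X σ)

/-- `⟨1_S, A_σ 1_T⟩` for the random walk matrix of the link of `σ` -/
def innerRW [DecidableEq W] (X : Finset (Finset W)) (σ : Finset W) (dtop : ℕ)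
    (S T : Finset W) : ℝ :=
  ((pairs X σ S T).card : ℝ) / (dtop : ℝ)

/-- `⟨1_S, A_σ^g 1_T⟩` for the `g`-signed random walk matrix of the link of `σ` -/
def innerRWSigned [DecidableEq W] (X : Finset (Finset W)) (σ : Finset W) (dtop : ℕ)
    (g : Finset W → ℤ) (S T : Finset W) : ℝ :=
  (∑ p ∈ pairs X σ S T, (g {p.1, p.2} : ℝ)) / (dtop : ℝ)

/-- `(β, t)`-sparseness -/
def IsSparse [Fintype W] [DecidableEq W] (X : Finset (Finset W)) (k dtop : ℕ)
    (β t : ℝ) : Prop :=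
  ∀ σ ∈ X, σ.card = k - 1 → ∀ S T : Finset W,
    (∀ v ∈ S ∪ T, {v} ∈ link X σ) → ((S ∪ T).card : ℝ) ≤ t →
    innerRW X σ dtop S T ≤ β * Real.sqrt ((S.card : ℝ) * (T.card : ℝ))


section AuxLemmas

lemma sgn_mul_self (b : Bool) : sgn b * sgn b = 1 := by cases b <;> simp [sgn]

lemma sgn_ne_zero (b : Bool) : sgn b ≠ 0 := by cases b <;> simp [sgn]

lemma sgn_injective : Function.Injective sgn := by
  intro a b h
  cases a <;> cases b <;> simp_all [sgn]

lemma signF_mul_self (s : Finset (V × Bool)) : signF s * signF s = 1 := by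
  rw [signF, ← Finset.prod_mul_distrib]
  exact Finset.prod_eq_one fun x _ => sgn_mul_self x.2

lemma signF_ne_zero (s : Finset (V × Bool)) : signF s ≠ 0 := by
  intro h
  have := signF_mul_self s
  rw [h, mul_zero] at this
  exact zero_ne_one this

lemma mem_localLift [Fintype V] [DecidableEq V] {X : Finset (Finset V)} {f : Finset V → ℤ}
    {k : ℕ} {τ : Finset (V × Bool)} :
    τ ∈ localLift X f k ↔ proj τ ∈ X ∧ τ.card = (proj τ).card ∧
      (τ.card = k + 1 → signF τ = f (proj τ)) := by
  simp [localLift]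

lemma injOn_of_card [DecidableEq V] {τ : Finset (V × Bool)} (h : τ.card = (proj τ).card) :
    Set.InjOn Prod.fst (τ : Set (V × Bool)) := by
  simp only [proj] at h
  exact Finset.card_image_iff.1 h.symm

/-- Vertices of the link of `σ'` in the lift project to vertices of the link of `proj σ'`. -/
lemma lift_vert [Fintype V] [DecidableEq V] {X : Finset (Finset V)} {f : Finset V → ℤ}
    {k : ℕ} {σ' : Finset (V × Bool)} {v : V × Bool}
    (h : {v} ∈ link (localLift X f k) σ') : {v.1} ∈ link X (proj σ') := by
  rw [link, Finset.mem_image] at h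
  obtain ⟨τ', hτ', hdiff⟩ := h
  rw [Finset.mem_filter] at hτ'
  obtain ⟨hτ'L, hsub⟩ := hτ'
  obtain ⟨hX, hcard, -⟩ := mem_localLift.1 hτ'L
  have hinj : Set.InjOn Prod.fst (τ' : Set (V × Bool)) := injOn_of_card hcard
  have hv : v ∈ τ' ∧ v ∉ σ' := by
    have : v ∈ τ' \ σ' := by rw [hdiff]; simp
    exact Finset.mem_sdiff.1 this
  have hnm : v.1 ∉ proj σ' := by
    intro hmem
    rw [proj, Finset.mem_image] at hmem
    obtain ⟨y, hy, hyx⟩ := hmem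
    have : y = v := hinj (Finset.mem_coe.2 (hsub hy)) (Finset.mem_coe.2 hv.1) hyx
    exact hv.2 (this ▸ hy)
  have hτeq : τ' = σ' ∪ {v} := by rw [← Finset.union_sdiff_of_subset hsub, hdiff]
  have hproj : proj τ' = proj σ' ∪ {v.1} := by
    rw [hτeq, proj, proj, Finset.image_union, Finset.image_singleton]
  rw [link, Finset.mem_image]
  refine ⟨proj τ', Finset.mem_filter.2 ⟨hX, ?_⟩, ?_⟩
  · rw [hproj]; exact Finset.subset_union_left
  · rw [hproj, Finset.union_sdiff_cancel_left (by simpa using hnm)]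

/-- Edges of the link of `σ'` in the lift project to edges of the link of `proj σ'`,
with the product of signs determined by `f`. -/
lemma lift_edge [Fintype V] [DecidableEq V] {X : Finset (Finset V)} {f : Finset V → ℤ}
    {k : ℕ} (hk : 2 ≤ k) {σ' : Finset (V × Bool)} (hσc : σ'.card = k - 1)
    {u w : V × Bool} (huw : u ≠ w) (h : {u, w} ∈ link (localLift X f k) σ') :
    u.1 ≠ w.1 ∧ {u.1, w.1} ∈ link X (proj σ') ∧
      sgn u.2 * (sgn w.2 * signF σ') = f (proj σ' ∪ {u.1, w.1}) := by
  rw [link, Finset.mem_image] at h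
  obtain ⟨τ', hτ', hdiff⟩ := h
  rw [Finset.mem_filter] at hτ'
  obtain ⟨hτ'L, hsub⟩ := hτ'
  obtain ⟨hX, hcard, hsgn⟩ := mem_localLift.1 hτ'L
  have hinj : Set.InjOn Prod.fst (τ' : Set (V × Bool)) := injOn_of_card hcard
  have hu : u ∈ τ' ∧ u ∉ σ' := by
    have : u ∈ τ' \ σ' := by rw [hdiff]; simp
    exact Finset.mem_sdiff.1 this
  have hw : w ∈ τ' ∧ w ∉ σ' := by
    have : w ∈ τ' \ σ' := by rw [hdiff]; simp
    exact Finset.mem_sdiff.1 this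
  have h1ne : u.1 ≠ w.1 := by
    intro hEq
    exact huw (hinj (Finset.mem_coe.2 hu.1) (Finset.mem_coe.2 hw.1) hEq)
  have hnm : ∀ x : V × Bool, x ∈ τ' → x ∉ σ' → x.1 ∉ proj σ' := by
    intro x hx hxs hmem
    rw [proj, Finset.mem_image] at hmem
    obtain ⟨y, hy, hyx⟩ := hmem
    have : y = x := hinj (Finset.mem_coe.2 (hsub hy)) (Finset.mem_coe.2 hx) hyx
    exact hxs (this ▸ hy)
  have hτeq : τ' = σ' ∪ {u, w} := by rw [← Finset.union_sdiff_of_subset hsub, hdiff]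
  have hproj : proj τ' = proj σ' ∪ {u.1, w.1} := by
    rw [hτeq, proj, proj, Finset.image_union]
    congr 1
    simp [Finset.image_insert]
  have hdisj : Disjoint (proj σ') ({u.1, w.1} : Finset V) := by
    rw [Finset.disjoint_right]
    intro x hx
    rcases Finset.mem_insert.1 hx with rfl | hx
    · exact hnm u hu.1 hu.2
    · rw [Finset.mem_singleton] at hx; subst hx; exact hnm w hw.1 hw.2
  have hlink : {u.1, w.1} ∈ link X (proj σ') := by
    rw [link, Finset.mem_image]
    refine ⟨proj τ', Finset.mem_filter.2 ⟨hX, ?_⟩, ?_⟩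
    · rw [hproj]; exact Finset.subset_union_left
    · rw [hproj, Finset.union_sdiff_cancel_left hdisj]
  have hdisj' : Disjoint σ' ({u, w} : Finset (V × Bool)) := by
    rw [Finset.disjoint_right]
    intro x hx
    rcases Finset.mem_insert.1 hx with rfl | hx
    · exact hu.2
    · rw [Finset.mem_singleton] at hx; subst hx; exact hw.2
  have hcard2 : τ'.card = k + 1 := by
    rw [hτeq, Finset.card_union_of_disjoint hdisj', Finset.card_pair huw, hσc]
    omega
  have hτeq' : τ' = insert u (insert w σ') := by
    rw [hτeq]
    ext x
    simp only [Finset.mem_union, Finset.mem_insert, Finset.mem_singleton]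
    tauto
  have hwσ : w ∉ σ' := hw.2
  have huwσ : u ∉ insert w σ' := by
    rw [Finset.mem_insert]
    push_neg
    exact ⟨huw, hu.2⟩
  have hsF : signF τ' = sgn u.2 * (sgn w.2 * signF σ') := by
    rw [hτeq', signF, Finset.prod_insert huwσ, Finset.prod_insert hwσ]
    rfl
  refine ⟨h1ne, hlink, ?_⟩
  rw [← hsF, hsgn hcard2, hproj]

/-- A Cauchy–Schwarz type inequality for square roots. -/
lemma sqrt_add_sqrt_le {a b c e : ℝ} (ha : 0 ≤ a) (hb : 0 ≤ b) (hc : 0 ≤ c) (he : 0 ≤ e) :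
    Real.sqrt (a * c) + Real.sqrt (b * e) ≤ Real.sqrt ((a + b) * (c + e)) := by
  have hs1 := Real.sq_sqrt (mul_nonneg ha hc)
  have hs2 := Real.sq_sqrt (mul_nonneg hb he)
  have hs3 := Real.sq_sqrt (mul_nonneg ha he)
  have hs4 := Real.sq_sqrt (mul_nonneg hb hc)
  have hn1 := Real.sqrt_nonneg (a * c)
  have hn2 := Real.sqrt_nonneg (b * e)
  have hn3 := Real.sqrt_nonneg (a * e)
  have hn4 := Real.sqrt_nonneg (b * c)
  have h5 : Real.sqrt (a * c) * Real.sqrt (b * e) = Real.sqrt (a * e) * Real.sqrt (b * c) := by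
    rw [← Real.sqrt_mul (mul_nonneg ha hc), ← Real.sqrt_mul (mul_nonneg ha he)]
    ring_nf
  have key : (Real.sqrt (a * c) + Real.sqrt (b * e)) ^ 2 ≤ (a + b) * (c + e) := by
    have hsq := sq_nonneg (Real.sqrt (a * e) - Real.sqrt (b * c))
    nlinarith [h5]
  calc Real.sqrt (a * c) + Real.sqrt (b * e)
      = Real.sqrt ((Real.sqrt (a * c) + Real.sqrt (b * e)) ^ 2) := by
        rw [Real.sqrt_sq (by positivity)]
    _ ≤ Real.sqrt ((a + b) * (c + e)) := Real.sqrt_le_sqrt key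

/-- The key counting lemma: edges between `S` and `T` in the link of `σ'` in the lift
are bounded by edges between the projections plus edges between the doubly-covered parts. -/
lemma card_pairs_lift_le [Fintype V] [DecidableEq V] {X : Finset (Finset V)}
    {f : Finset V → ℤ} {k : ℕ} (hk : 2 ≤ k) {σ' : Finset (V × Bool)}
    (hσc : σ'.card = k - 1) (S T : Finset (V × Bool)) :
    (pairs (localLift X f k) σ' S T).card ≤
      (pairs X (proj σ') (S.image Prod.fst) (T.image Prod.fst)).card +
      (pairs X (proj σ')
        ((S.image Prod.fst).filter (fun a => (a, true) ∈ S ∧ (a, false) ∈ S))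
        ((T.image Prod.fst).filter (fun a => (a, true) ∈ T ∧ (a, false) ∈ T))).card := by
  classical
  set P := pairs (localLift X f k) σ' S T with hP
  set A := pairs X (proj σ') (S.image Prod.fst) (T.image Prod.fst) with hA
  set B := pairs X (proj σ')
      ((S.image Prod.fst).filter (fun a => (a, true) ∈ S ∧ (a, false) ∈ S))
      ((T.image Prod.fst).filter (fun a => (a, true) ∈ T ∧ (a, false) ∈ T)) with hB
  set φ : (V × Bool) × (V × Bool) → V × V := fun p => (p.1.1, p.2.1) with hφdef
  have hmemP : ∀ p ∈ P, p.1 ∈ S ∧ p.2 ∈ T ∧ p.1 ≠ p.2 ∧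
      {p.1, p.2} ∈ link (localLift X f k) σ' := by
    intro p hp
    rw [hP, pairs, Finset.mem_filter, Finset.mem_product] at hp
    exact ⟨hp.1.1, hp.1.2, hp.2.1, hp.2.2⟩
  have hedge : ∀ p ∈ P, p.1.1 ≠ p.2.1 ∧ {p.1.1, p.2.1} ∈ link X (proj σ') ∧
      sgn p.1.2 * (sgn p.2.2 * signF σ') = f (proj σ' ∪ {p.1.1, p.2.1}) := by
    intro p hp
    obtain ⟨-, -, hne, hl⟩ := hmemP p hp
    exact lift_edge hk hσc hne hl
  have hφ : ∀ p ∈ P, φ p ∈ A := by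
    intro p hp
    obtain ⟨hpS, hpT, -, -⟩ := hmemP p hp
    obtain ⟨hne, hl, -⟩ := hedge p hp
    rw [hA, pairs, Finset.mem_filter, Finset.mem_product]
    exact ⟨⟨Finset.mem_image_of_mem _ hpS, Finset.mem_image_of_mem _ hpT⟩, hne, hl⟩
  -- injectivity given the first sign
  have hkey : ∀ p ∈ P, ∀ q ∈ P, φ p = φ q → p.1.2 = q.1.2 → p = q := by
    intro p hp q hq hφeq hb
    have h11 : p.1.1 = q.1.1 := (Prod.ext_iff.1 hφeq).1
    have h21 : p.2.1 = q.2.1 := (Prod.ext_iff.1 hφeq).2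
    obtain ⟨-, -, hsp⟩ := hedge p hp
    obtain ⟨-, -, hsq⟩ := hedge q hq
    rw [h11, h21] at hsp
    have heq : sgn p.1.2 * (sgn p.2.2 * signF σ') = sgn p.1.2 * (sgn q.2.2 * signF σ') := by
      rw [hsp, hb, hsq]
    have heq2 : sgn p.2.2 * signF σ' = sgn q.2.2 * signF σ' :=
      mul_left_cancel₀ (sgn_ne_zero _) heq
    have heq3 : sgn p.2.2 = sgn q.2.2 :=
      mul_right_cancel₀ (signF_ne_zero _) heq2
    have h22 : p.2.2 = q.2.2 := sgn_injective heq3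
    exact Prod.ext_iff.2 ⟨Prod.ext_iff.2 ⟨h11, hb⟩, Prod.ext_iff.2 ⟨h21, h22⟩⟩
  have hbound : ∀ q ∈ A, (P.filter (fun p => φ p = q)).card ≤
      1 + (if q ∈ B then 1 else 0) := by
    intro q hqA
    by_cases hqB : q ∈ B
    · -- fiber has at most 2 elements: determined by first sign
      simp only [hqB, if_true]
      have : (P.filter (fun p => φ p = q)).card ≤ (Finset.univ : Finset Bool).card := by
        apply Finset.card_le_card_of_injOn (fun p => p.1.2)
        · intro p _; exact Finset.mem_univ _
        · intro p hp r hr hpr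
          rw [Finset.mem_coe, Finset.mem_filter] at hp hr
          exact hkey p hp.1 r hr.1 (hp.2.trans hr.2.symm) hpr
      simpa using this
    · -- fiber has at most 1 element
      simp only [hqB, if_false]
      by_contra hcon
      push_neg at hcon
      have h2 : 1 < (P.filter (fun p => φ p = q)).card := by omega
      obtain ⟨p, hp, r, hr, hpr⟩ := Finset.one_lt_card.1 h2
      rw [Finset.mem_filter] at hp hr
      have hφpr : φ p = φ r := hp.2.trans hr.2.symm
      have hb1 : p.1.2 ≠ r.1.2 := by
        intro hb
        exact hpr (hkey p hp.1 r hr.1 hφpr hb)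
      -- second signs also differ
      obtain ⟨-, -, hsp⟩ := hedge p hp.1
      obtain ⟨-, -, hsr⟩ := hedge r hr.1
      have h11 : p.1.1 = r.1.1 := (Prod.ext_iff.1 hφpr).1
      have h21 : p.2.1 = r.2.1 := (Prod.ext_iff.1 hφpr).2
      rw [h11, h21] at hsp
      have hb2 : p.2.2 ≠ r.2.2 := by
        intro hb
        have heq : sgn p.1.2 * (sgn r.2.2 * signF σ') = sgn r.1.2 * (sgn r.2.2 * signF σ') := by
          rw [← hb, hsp, hb, hsr]
        have heq2 : sgn p.1.2 * signF σ' = sgn r.1.2 * signF σ' := by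
          have e1 : sgn p.1.2 * signF σ' * sgn r.2.2 = sgn r.1.2 * signF σ' * sgn r.2.2 := by
            ring_nf
            ring_nf at heq
            linarith [heq]
          exact mul_right_cancel₀ (sgn_ne_zero _) e1
        exact hb1 (sgn_injective (mul_right_cancel₀ (signF_ne_zero _) heq2))
      -- conclude q ∈ B, contradiction
      obtain ⟨hpS, hpT, -, -⟩ := hmemP p hp.1
      obtain ⟨hrS, hrT, -, -⟩ := hmemP r hr.1
      have hq1p : p.1.1 = q.1 := (Prod.ext_iff.1 hp.2).1
      have hq2p : p.2.1 = q.2 := (Prod.ext_iff.1 hp.2).2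
      have hq1r : r.1.1 = q.1 := (Prod.ext_iff.1 hr.2).1
      have hq2r : r.2.1 = q.2 := (Prod.ext_iff.1 hr.2).2
      have hS2 : (q.1, true) ∈ S ∧ (q.1, false) ∈ S := by
        have hpS' : (q.1, p.1.2) ∈ S := by
          rw [← hq1p, Prod.mk.eta]; exact hpS
        have hrS' : (q.1, r.1.2) ∈ S := by
          rw [← hq1r, Prod.mk.eta]; exact hrS
        cases hx : p.1.2 <;> cases hy : r.1.2
        · exact absurd (hx.trans hy.symm) hb1
        · exact ⟨hy ▸ hrS', hx ▸ hpS'⟩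
        · exact ⟨hx ▸ hpS', hy ▸ hrS'⟩
        · exact absurd (hx.trans hy.symm) hb1
      have hT2 : (q.2, true) ∈ T ∧ (q.2, false) ∈ T := by
        have hpT' : (q.2, p.2.2) ∈ T := by
          rw [← hq2p, Prod.mk.eta]; exact hpT
        have hrT' : (q.2, r.2.2) ∈ T := by
          rw [← hq2r, Prod.mk.eta]; exact hrT
        cases hx : p.2.2 <;> cases hy : r.2.2
        · exact absurd (hx.trans hy.symm) hb2
        · exact ⟨hy ▸ hrT', hx ▸ hpT'⟩
        · exact ⟨hx ▸ hpT', hy ▸ hrT'⟩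
        · exact absurd (hx.trans hy.symm) hb2
      apply hqB
      rw [hB, pairs, Finset.mem_filter, Finset.mem_product]
      rw [hA, pairs, Finset.mem_filter, Finset.mem_product] at hqA
      refine ⟨⟨?_, ?_⟩, hqA.2⟩
      · exact Finset.mem_filter.2 ⟨Finset.mem_image.2 ⟨(q.1, true), hS2.1, rfl⟩, hS2⟩
      · exact Finset.mem_filter.2 ⟨Finset.mem_image.2 ⟨(q.2, true), hT2.1, rfl⟩, hT2⟩
  calc P.card = ∑ q ∈ A, (P.filter (fun p => φ p = q)).card :=
        Finset.card_eq_sum_card_fiberwise hφ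
    _ ≤ ∑ q ∈ A, (1 + if q ∈ B then 1 else 0) := Finset.sum_le_sum hbound
    _ = A.card + (A ∩ B).card := by
        rw [Finset.sum_add_distrib, Finset.sum_const, smul_eq_mul, mul_one,
          Finset.sum_ite_mem, Finset.sum_const, smul_eq_mul, mul_one]
    _ ≤ A.card + B.card :=
        Nat.add_le_add_left (Finset.card_le_card Finset.inter_subset_right) _

/-- counting vertices with multiplicity -/
lemma card_proj_add [DecidableEq V] (S : Finset (V × Bool)) :
    (S.image Prod.fst).card +
      ((S.image Prod.fst).filter (fun a => (a, true) ∈ S ∧ (a, false) ∈ S)).card ≤ S.card := by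
  classical
  have h := Finset.card_eq_sum_card_fiberwise
    (f := Prod.fst) (s := S) (t := S.image Prod.fst)
    (fun x hx => Finset.mem_image_of_mem _ hx)
  rw [h]
  have hb : ∀ a ∈ S.image Prod.fst,
      (1 + if (a, true) ∈ S ∧ (a, false) ∈ S then 1 else 0) ≤
        (S.filter (fun x => x.1 = a)).card := by
    intro a ha
    by_cases h2 : (a, true) ∈ S ∧ (a, false) ∈ S
    · simp only [h2, if_true]
      have hsub : ({(a, true), (a, false)} : Finset (V × Bool)) ⊆
          S.filter (fun x => x.1 = a) := by
        intro x hx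
        rcases Finset.mem_insert.1 hx with rfl | hx
        · exact Finset.mem_filter.2 ⟨h2.1, rfl⟩
        · rw [Finset.mem_singleton] at hx; subst hx
          exact Finset.mem_filter.2 ⟨h2.2, rfl⟩
      have := Finset.card_le_card hsub
      rwa [Finset.card_insert_of_notMem (by simp), Finset.card_singleton] at this
    · simp only [h2, if_false]
      obtain ⟨x, hx, rfl⟩ := Finset.mem_image.1 ha
      exact Nat.succ_le_of_lt (Finset.card_pos.2 ⟨x, Finset.mem_filter.2 ⟨hx, rfl⟩⟩)
  calc (S.image Prod.fst).card +
      ((S.image Prod.fst).filter (fun a => (a, true) ∈ S ∧ (a, false) ∈ S)).card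
      = ∑ a ∈ S.image Prod.fst, (1 + if (a, true) ∈ S ∧ (a, false) ∈ S then 1 else 0) := by
        rw [Finset.sum_add_distrib, Finset.sum_const, smul_eq_mul, mul_one,
          Finset.card_filter]
    _ ≤ ∑ a ∈ S.image Prod.fst, (S.filter (fun x => x.1 = a)).card :=
        Finset.sum_le_sum hb

end AuxLemmas

/-- if a hyper-regular `k`-dimensional complex `X` is
`(β,t)`-sparse, then for every ±1 signing `f` of its `k`-faces, the `f`-local
lift is also `(β,t)`-sparse. -/
theorem localLift_sparse {V : Type*} [Fintype V] [DecidableEq V]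
    (k : ℕ) (hk : 2 ≤ k) (X : Finset (Finset V)) (hdc : DownwardClosed X)
    (hpure : Pure X k) (d : ℕ → ℕ) (hreg : Regular X k d)
    (β t : ℝ) (hsparse : IsSparse X k (d (k - 1)) β t)
    (f : Finset V → ℤ) (hf : ∀ τ, f τ = 1 ∨ f τ = -1) :
    IsSparse (localLift X f k) k (d (k - 1)) β t := by
  intro σ' hσ' hσc S T hvert hcardST
  obtain ⟨hσX, hσcard, -⟩ := mem_localLift.1 hσ'
  have hσcard' : (proj σ').card = k - 1 := hσcard.symm.trans hσc
  -- the projected sets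
  have hvert' : ∀ v ∈ S.image Prod.fst ∪ T.image Prod.fst, {v} ∈ link X (proj σ') := by
    intro v hv
    rcases Finset.mem_union.1 hv with hv | hv
    · obtain ⟨x, hx, rfl⟩ := Finset.mem_image.1 hv
      exact lift_vert (hvert x (Finset.mem_union_left _ hx))
    · obtain ⟨x, hx, rfl⟩ := Finset.mem_image.1 hv
      exact lift_vert (hvert x (Finset.mem_union_right _ hx))
  have hunion : S.image Prod.fst ∪ T.image Prod.fst = (S ∪ T).image Prod.fst :=
    (Finset.image_union _ _).symm
  have hST' : (((S.image Prod.fst ∪ T.image Prod.fst)).card : ℝ) ≤ t := by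
    refine le_trans ?_ hcardST
    rw [hunion]
    exact_mod_cast Finset.card_image_le
  have hsub2 : ((S.image Prod.fst).filter (fun a => (a, true) ∈ S ∧ (a, false) ∈ S) ∪
      (T.image Prod.fst).filter (fun a => (a, true) ∈ T ∧ (a, false) ∈ T)) ⊆
      S.image Prod.fst ∪ T.image Prod.fst :=
    Finset.union_subset_union (Finset.filter_subset _ _) (Finset.filter_subset _ _)
  have hST2 : ((((S.image Prod.fst).filter (fun a => (a, true) ∈ S ∧ (a, false) ∈ S) ∪
      (T.image Prod.fst).filter (fun a => (a, true) ∈ T ∧ (a, false) ∈ T))).card : ℝ) ≤ t := by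
    refine le_trans ?_ hST'
    exact_mod_cast Finset.card_le_card hsub2
  by_cases hS : S = ∅
  · have hp : pairs (localLift X f k) σ' S T = ∅ := by
      rw [hS]
      simp [pairs]
    rw [innerRW, hp, hS]
    simp
  by_cases hT : T = ∅
  · have hp : pairs (localLift X f k) σ' S T = ∅ := by
      rw [hT]
      simp [pairs]
    rw [innerRW, hp, hT]
    simp
  -- both nonempty
  have hSne : S.Nonempty := Finset.nonempty_iff_ne_empty.2 hS
  have hTne : T.Nonempty := Finset.nonempty_iff_ne_empty.2 hT
  have h1 := hsparse (proj σ') hσX hσcard' (S.image Prod.fst) (T.image Prod.fst) hvert' hST'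
  have h2 := hsparse (proj σ') hσX hσcard'
    ((S.image Prod.fst).filter (fun a => (a, true) ∈ S ∧ (a, false) ∈ S))
    ((T.image Prod.fst).filter (fun a => (a, true) ∈ T ∧ (a, false) ∈ T))
    (fun v hv => hvert' v (hsub2 hv)) hST2
  have hβ : 0 ≤ β := by
    have hpos : (0 : ℝ) < Real.sqrt (((S.image Prod.fst).card : ℝ) *
        ((T.image Prod.fst).card : ℝ)) := by
      apply Real.sqrt_pos.2
      have h1' : 0 < (S.image Prod.fst).card := Finset.card_pos.2 (hSne.image _)
      have h2' : 0 < (T.image Prod.fst).card := Finset.card_pos.2 (hTne.image _)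
      positivity
    have h0 : 0 ≤ innerRW X (proj σ') (d (k - 1)) (S.image Prod.fst) (T.image Prod.fst) := by
      rw [innerRW]
      positivity
    nlinarith [h1]
  have hcount := card_pairs_lift_le (X := X) (f := f) hk hσc S T
  have hcS := card_proj_add S
  have hcT := card_proj_add T
  rcases Nat.eq_zero_or_pos (d (k - 1)) with hd | hd
  · rw [innerRW, hd]
    simp only [Nat.cast_zero, div_zero]
    exact mul_nonneg hβ (Real.sqrt_nonneg _)
  · have hdpos : (0 : ℝ) < (d (k - 1) : ℝ) := by exact_mod_cast hd
    rw [innerRW]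
    calc ((pairs (localLift X f k) σ' S T).card : ℝ) / (d (k - 1) : ℝ)
        ≤ (((pairs X (proj σ') (S.image Prod.fst) (T.image Prod.fst)).card : ℝ) +
            ((pairs X (proj σ')
              ((S.image Prod.fst).filter (fun a => (a, true) ∈ S ∧ (a, false) ∈ S))
              ((T.image Prod.fst).filter (fun a => (a, true) ∈ T ∧ (a, false) ∈ T))).card : ℝ)) /
            (d (k - 1) : ℝ) := by
          gcongr
          exact_mod_cast hcount
      _ = innerRW X (proj σ') (d (k - 1)) (S.image Prod.fst) (T.image Prod.fst) +
          innerRW X (proj σ') (d (k - 1))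
            ((S.image Prod.fst).filter (fun a => (a, true) ∈ S ∧ (a, false) ∈ S))
            ((T.image Prod.fst).filter (fun a => (a, true) ∈ T ∧ (a, false) ∈ T)) := by
          rw [innerRW, innerRW, ← add_div]
      _ ≤ β * Real.sqrt (((S.image Prod.fst).card : ℝ) * ((T.image Prod.fst).card : ℝ)) +
          β * Real.sqrt
            ((((S.image Prod.fst).filter (fun a => (a, true) ∈ S ∧ (a, false) ∈ S)).card : ℝ) *
             (((T.image Prod.fst).filter (fun a => (a, true) ∈ T ∧ (a, false) ∈ T)).card : ℝ)) :=
          add_le_add h1 h2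
      _ ≤ β * Real.sqrt ((((S.image Prod.fst).card : ℝ) +
            (((S.image Prod.fst).filter (fun a => (a, true) ∈ S ∧ (a, false) ∈ S)).card : ℝ)) *
            (((T.image Prod.fst).card : ℝ) +
            (((T.image Prod.fst).filter (fun a => (a, true) ∈ T ∧ (a, false) ∈ T)).card : ℝ))) := by
          rw [← mul_add]
          exact mul_le_mul_of_nonneg_left
            (sqrt_add_sqrt_le (by positivity) (by positivity) (by positivity) (by positivity)) hβ
      _ ≤ β * Real.sqrt ((S.card : ℝ) * (T.card : ℝ)) := by
          apply mul_le_mul_of_nonneg_left _ hβ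
          apply Real.sqrt_le_sqrt
          have hS' : (((S.image Prod.fst).card : ℝ) +
              (((S.image Prod.fst).filter (fun a => (a, true) ∈ S ∧ (a, false) ∈ S)).card : ℝ)) ≤
              (S.card : ℝ) := by exact_mod_cast hcS
          have hT' : (((T.image Prod.fst).card : ℝ) +
              (((T.image Prod.fst).filter (fun a => (a, true) ∈ T ∧ (a, false) ∈ T)).card : ℝ)) ≤
              (T.card : ℝ) := by exact_mod_cast hcT
          exact mul_le_mul hS' hT' (by positivity) (by positivity)


end HDX
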